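/- For any positive numbers η and η′, the region D^η_{η′} = { x in the nonnegative orthant of ℝ⁷ : Λ/(μ+d_I+d_A+d_H) − η′ ≤ N ≤ Λ/μ + η } is globally absorbent for the COVID-19 system: for every solution x with x(0) in the open positive orthant (0,∞)⁷ there exists a time T ≥ 0 such that Λ/(μ+d_I+d_A+d_H) − η′ ≤ N(t) ≤ Λ/μ + η for all t ≥ T. -/

import Mathlib

open scoped BigOperators

/-- The vector field of the deterministic SQEAIHR COVID-19 model.
State: `x = (S, Q, E, A, I, H, R)` indexed by `Fin 7`. -/
noncomputable def covidF (Λ b q lam μ σ εA γA dA εI γI dI γH dH θ p β₁ β₂ : ℝ)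
    (x : Fin 7 → ℝ) : Fin 7 → ℝ :=
  ![Λ - (β₁ - β₂ * x 4 / (b + x 4)) * x 0 * (x 4 + θ * x 3) + lam * x 1 - (μ + q) * x 0,
    q * x 0 - (μ + lam) * x 1,
    (β₁ - β₂ * x 4 / (b + x 4)) * x 0 * (x 4 + θ * x 3) - (μ + σ) * x 2,
    (1 - p) * σ * x 2 - (μ + εA + γA + dA) * x 3,
    σ * p * x 2 - (μ + εI + γI + dI) * x 4,
    εI * x 4 + εA * x 3 - (μ + dH + γH) * x 5,
    γH * x 5 + γI * x 4 + γA * x 3 - μ * x 6]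

/-- A solution of the system on `[0, ∞)`: a function differentiable (within `[0,∞)`) whose
derivative equals the vector field at every `t ≥ 0`. -/
def IsSolution (F : (Fin 7 → ℝ) → Fin 7 → ℝ) (x : ℝ → Fin 7 → ℝ) : Prop :=
  ∀ t : ℝ, 0 ≤ t → HasDerivWithinAt x (F (x t)) (Set.Ici (0 : ℝ)) t

lemma covid_sumF (Λ b q lam μ σ εA γA dA εI γI dI γH dH θ p β₁ β₂ : ℝ) (y : Fin 7 → ℝ) :
    ∑ i, covidF Λ b q lam μ σ εA γA dA εI γI dI γH dH θ p β₁ β₂ y i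
      = Λ - μ * (∑ i, y i) - dA * y 3 - dI * y 4 - dH * y 5 := by
  simp [covidF, Fin.sum_univ_succ, Matrix.cons_val_succ,
    show (Fin.succ 2 : Fin 7) = 3 from rfl, show ((Fin.succ 2).succ : Fin 7) = 4 from rfl,
    show ((Fin.succ 2).succ.succ : Fin 7) = 5 from rfl,
    show ((Fin.succ 2).succ.succ.succ : Fin 7) = 6 from rfl]
  ring

lemma mono_exp {D : Set ℝ} (hD : Convex ℝ D) {g g' : ℝ → ℝ} (K : ℝ)
    (hg : ContinuousOn g D)
    (hd : ∀ t ∈ interior D, HasDerivWithinAt g (g' t) (interior D) t)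
    (hineq : ∀ t ∈ interior D, 0 ≤ g' t + K * g t) :
    MonotoneOn (fun t => g t * Real.exp (K * t)) D := by
  apply monotoneOn_of_hasDerivWithinAt_nonneg hD
    (f' := fun t => (g' t + K * g t) * Real.exp (K * t))
  · exact hg.mul (Real.continuous_exp.comp (continuous_const.mul continuous_id)).continuousOn
  · intro t ht
    have he : HasDerivAt (fun t => Real.exp (K * t)) (Real.exp (K * t) * K) t := by
      simpa using ((hasDerivAt_id t).const_mul K).exp
    have h2 : HasDerivWithinAt (fun t => g t * Real.exp (K * t))
        (g' t * Real.exp (K * t) + g t * (Real.exp (K * t) * K)) (interior D) t :=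
      (hd t ht).mul he.hasDerivWithinAt
    convert h2 using 1; ring
  · intro t ht
    exact mul_nonneg (hineq t ht) (Real.exp_nonneg _)

lemma anti_exp {D : Set ℝ} (hD : Convex ℝ D) {g g' : ℝ → ℝ} (K : ℝ)
    (hg : ContinuousOn g D)
    (hd : ∀ t ∈ interior D, HasDerivWithinAt g (g' t) (interior D) t)
    (hineq : ∀ t ∈ interior D, g' t + K * g t ≤ 0) :
    AntitoneOn (fun t => g t * Real.exp (K * t)) D := by
  have := mono_exp hD (g := fun t => -g t) (g' := fun t => -g' t) K hg.neg
    (fun t ht => (hd t ht).neg) (fun t ht => by have := hineq t ht; simp; linarith)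
  intro a ha b hb hab
  have h2 := this ha hb hab
  simp only [neg_mul] at h2
  dsimp only
  linarith

set_option maxHeartbeats 1000000 in
theorem covid_region_globally_absorbent
    (Λ b q lam μ σ εA γA dA εI γI dI γH dH θ p β₁ β₂ : ℝ)
    (hΛ : 0 < Λ) (hb : 0 < b) (hq : 0 < q) (hlam : 0 < lam) (hμ : 0 < μ)
    (hσ : 0 < σ) (hεA : 0 < εA) (hγA : 0 < γA) (hdA : 0 < dA)
    (hεI : 0 < εI) (hγI : 0 < γI) (hdI : 0 < dI) (hγH : 0 < γH) (hdH : 0 < dH)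
    (hθ : θ ∈ Set.Ioo (0 : ℝ) 1) (hp : p ∈ Set.Ioo (0 : ℝ) 1)
    (hβ₂ : 0 < β₂) (hβ : β₂ ≤ β₁)
    (η η' : ℝ) (hη : 0 < η) (hη' : 0 < η')
    (x : ℝ → Fin 7 → ℝ)
    (hx : IsSolution (covidF Λ b q lam μ σ εA γA dA εI γI dI γH dH θ p β₁ β₂) x)
    (h0 : ∀ i, 0 < x 0 i) :
    ∃ T : ℝ, 0 ≤ T ∧ ∀ t : ℝ, T ≤ t →
      Λ / (μ + dI + dA + dH) - η' ≤ (∑ i, x t i) ∧ (∑ i, x t i) ≤ Λ / μ + η := by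
  have hβ₁ : 0 < β₁ := hβ₂.trans_le hβ
  have hxi : ∀ (i : Fin 7), ∀ t, 0 ≤ t → HasDerivWithinAt (fun u => x u i)
      (covidF Λ b q lam μ σ εA γA dA εI γI dI γH dH θ p β₁ β₂ (x t) i) (Set.Ici 0) t :=
    fun i t ht => hasDerivWithinAt_pi.1 (hx t ht) i
  have hcont : ∀ (i : Fin 7), ContinuousOn (fun u => x u i) (Set.Ici 0) :=
    fun i t ht => (hxi i t ht).continuousWithinAt
  have hcontx : ContinuousOn x (Set.Ici 0) := fun t ht => (hx t ht).continuousWithinAt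
  -- Positivity of all components for all time
  have hpos : ∀ t, 0 ≤ t → ∀ i, 0 < x t i := by
    by_contra hcon
    push_neg at hcon
    obtain ⟨t₀, ht₀, i₀, hi₀⟩ := hcon
    set B : Set ℝ := Set.Icc 0 t₀ ∩ ⋃ i : Fin 7, (fun u => x u i) ⁻¹' Set.Iic 0 with hBdef
    have hBclosed : IsClosed B := by
      rw [hBdef, Set.inter_iUnion]
      exact isClosed_iUnion_of_finite fun i =>
        ((hcont i).mono Set.Icc_subset_Ici_self).preimage_isClosed_of_isClosed
          isClosed_Icc isClosed_Iic
    have hBne : B.Nonempty := ⟨t₀, ⟨ht₀, le_refl _⟩, Set.mem_iUnion.2 ⟨i₀, hi₀⟩⟩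
    have hBbdd : BddBelow B := ⟨0, fun u hu => hu.1.1⟩
    set τ := sInf B with hτdef
    have hτB : τ ∈ B := hBclosed.csInf_mem hBne hBbdd
    have hτ0 : 0 ≤ τ := hτB.1.1
    obtain ⟨iz, hiz⟩ := Set.mem_iUnion.1 hτB.2
    have hτpos : 0 < τ := by
      rcases hτ0.lt_or_eq with h | h
      · exact h
      · exact absurd hiz (by simp [← h]; exact h0 iz)
    have hlt : ∀ u, u ∈ Set.Ico (0:ℝ) τ → ∀ i, 0 < x u i := by
      intro u hu i
      by_contra hle
      push_neg at hle
      have huB : u ∈ B := ⟨⟨hu.1, hu.2.le.trans hτB.1.2⟩, Set.mem_iUnion.2 ⟨i, hle⟩⟩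
      exact absurd (csInf_le hBbdd huB) (not_le.2 hu.2)
    -- bound on trajectory over [0, τ]
    obtain ⟨M0, hM0⟩ := (isCompact_Icc : IsCompact (Set.Icc (0:ℝ) τ)).exists_bound_of_continuousOn
      (hcontx.mono Set.Icc_subset_Ici_self)
    set M := max M0 0 with hMdef
    have hM : 0 ≤ M := le_max_right _ _
    have hxM : ∀ u ∈ Set.Icc (0:ℝ) τ, ∀ i, x u i ≤ M := fun u hu i =>
      (le_abs_self _).trans ((norm_le_pi_norm (x u) i).trans ((hM0 u hu).trans (le_max_left _ _)))
    set K := 2*β₁*M + μ + q + lam + σ + εA + γA + dA + εI + γI + dI + γH + dH with hK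
    have h2bm : 0 ≤ 2*β₁*M := by positivity
    clear_value M K
    have hkey : ∀ (i : Fin 7), ∀ t ∈ Set.Ioo (0:ℝ) τ,
        0 ≤ covidF Λ b q lam μ σ εA γA dA εI γI dI γH dH θ p β₁ β₂ (x t) i + K * x t i := by
      intro i t ht
      have hy : ∀ j, 0 < x t j := hlt t ⟨ht.1.le, ht.2⟩
      have htI : t ∈ Set.Icc (0:ℝ) τ := ⟨ht.1.le, ht.2.le⟩
      have hA := hxM t htI 3
      have hI := hxM t htI 4
      have hbI : 0 < b + x t 4 := by linarith [hy 4]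
      have hfrac0 : β₂ * x t 4 / (b + x t 4) ≤ β₂ := by
        rw [div_le_iff₀ hbI]; nlinarith [hy 4]
      have hfrac1 : 0 ≤ β₂ * x t 4 / (b + x t 4) :=
        div_nonneg (mul_nonneg hβ₂.le (hy 4).le) hbI.le
      have hf1 : 0 ≤ β₁ - β₂ * x t 4 / (b + x t 4) := by linarith
      have hf2 : β₁ - β₂ * x t 4 / (b + x t 4) ≤ β₁ := by linarith
      have hIA0 : 0 ≤ x t 4 + θ * x t 3 :=
        add_nonneg (hy 4).le (mul_nonneg hθ.1.le (hy 3).le)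
      have hIA : x t 4 + θ * x t 3 ≤ 2*M := by
        have := mul_nonneg (by linarith [hθ.2] : (0:ℝ) ≤ 1 - θ) (hy 3).le
        nlinarith
      obtain ⟨d, hdeq⟩ : ∃ d, β₂ * x t 4 / (b + x t 4) = d := ⟨_, rfl⟩
      rw [hdeq] at hf1 hf2
      fin_cases i
      · show 0 ≤ (Λ - (β₁ - β₂ * x t 4 / (b + x t 4)) * x t 0 * (x t 4 + θ * x t 3)
            + lam * x t 1 - (μ + q) * x t 0) + K * x t 0
        rw [hdeq]
        have e1 : (β₁ - d) * x t 0 * (x t 4 + θ * x t 3)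
            ≤ 2*β₁*M * x t 0 := by
          calc (β₁ - d) * x t 0 * (x t 4 + θ * x t 3)
              ≤ β₁ * x t 0 * (x t 4 + θ * x t 3) :=
                mul_le_mul_of_nonneg_right (mul_le_mul_of_nonneg_right hf2 (hy 0).le) hIA0
            _ ≤ β₁ * x t 0 * (2*M) :=
                mul_le_mul_of_nonneg_left hIA (mul_nonneg hβ₁.le (hy 0).le)
            _ = 2*β₁*M * x t 0 := by ring
        have e3 : (2*β₁*M + μ + q) * x t 0 ≤ K * x t 0 :=
          mul_le_mul_of_nonneg_right (by rw [hK]; linarith) (hy 0).le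
        linarith [mul_nonneg hlam.le (hy 1).le, e1, e3]
      · show 0 ≤ (q * x t 0 - (μ + lam) * x t 1) + K * x t 1
        have e3 : (μ + lam) * x t 1 ≤ K * x t 1 :=
          mul_le_mul_of_nonneg_right (by rw [hK]; linarith) (hy 1).le
        linarith [mul_nonneg hq.le (hy 0).le, e3]
      · show 0 ≤ ((β₁ - β₂ * x t 4 / (b + x t 4)) * x t 0 * (x t 4 + θ * x t 3)
            - (μ + σ) * x t 2) + K * x t 2
        rw [hdeq]
        have e3 : (μ + σ) * x t 2 ≤ K * x t 2 :=
          mul_le_mul_of_nonneg_right (by rw [hK]; linarith) (hy 2).le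
        linarith [mul_nonneg (mul_nonneg hf1 (hy 0).le) hIA0, e3]
      · show 0 ≤ ((1 - p) * σ * x t 2 - (μ + εA + γA + dA) * x t 3) + K * x t 3
        have e3 : (μ + εA + γA + dA) * x t 3 ≤ K * x t 3 :=
          mul_le_mul_of_nonneg_right (by rw [hK]; linarith) (hy 3).le
        linarith [mul_nonneg (mul_nonneg (by linarith [hp.2] : (0:ℝ) ≤ 1 - p) hσ.le) (hy 2).le, e3]
      · show 0 ≤ (σ * p * x t 2 - (μ + εI + γI + dI) * x t 4) + K * x t 4
        have e3 : (μ + εI + γI + dI) * x t 4 ≤ K * x t 4 :=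
          mul_le_mul_of_nonneg_right (by rw [hK]; linarith) (hy 4).le
        linarith [mul_nonneg (mul_nonneg hσ.le hp.1.le) (hy 2).le, e3]
      · show 0 ≤ (εI * x t 4 + εA * x t 3 - (μ + dH + γH) * x t 5) + K * x t 5
        have e3 : (μ + dH + γH) * x t 5 ≤ K * x t 5 :=
          mul_le_mul_of_nonneg_right (by rw [hK]; linarith) (hy 5).le
        linarith [mul_nonneg hεI.le (hy 4).le, mul_nonneg hεA.le (hy 3).le, e3]
      · show 0 ≤ (γH * x t 5 + γI * x t 4 + γA * x t 3 - μ * x t 6) + K * x t 6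
        have e3 : μ * x t 6 ≤ K * x t 6 :=
          mul_le_mul_of_nonneg_right (by rw [hK]; linarith) (hy 6).le
        linarith [mul_nonneg hγH.le (hy 5).le, mul_nonneg hγI.le (hy 4).le,
          mul_nonneg hγA.le (hy 3).le, e3]
    have hposτ : ∀ i, 0 < x τ i := by
      intro i
      have hmono := mono_exp (convex_Icc (0:ℝ) τ) (g := fun u => x u i)
        (g' := fun u => covidF Λ b q lam μ σ εA γA dA εI γI dI γH dH θ p β₁ β₂ (x u) i) K
        ((hcont i).mono Set.Icc_subset_Ici_self)
        (by
          intro u hu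
          rw [interior_Icc] at hu ⊢
          exact (hxi i u hu.1.le).mono fun s hs => hs.1.le)
        (by
          intro u hu
          rw [interior_Icc] at hu
          exact hkey i u hu)
      have h01 := hmono (Set.left_mem_Icc.2 hτ0) (Set.right_mem_Icc.2 hτ0) hτ0
      simp only [mul_zero, Real.exp_zero, mul_one] at h01
      nlinarith [Real.exp_pos (K * τ), h0 i, h01]
    exact absurd hiz (by simp; exact hposτ iz)
  -- component ≤ total
  have hcomp_le : ∀ t, 0 ≤ t → ∀ i, x t i ≤ ∑ j, x t j := fun t ht i =>
    Finset.single_le_sum (fun j _ => (hpos t ht j).le) (Finset.mem_univ i)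
  -- derivative of the total population
  have hN' : ∀ t, 0 ≤ t → HasDerivWithinAt (fun u => ∑ i, x u i)
      (Λ - μ * (∑ i, x t i) - dA * x t 3 - dI * x t 4 - dH * x t 5) (Set.Ici 0) t := by
    intro t ht
    have h := HasDerivWithinAt.sum (u := (Finset.univ : Finset (Fin 7))) (fun i _ => hxi i t ht)
    rwa [covid_sumF] at h
  have hNcont : ContinuousOn (fun u => ∑ i, x u i) (Set.Ici 0) :=
    fun t ht => (hN' t ht).continuousWithinAt
  set m := μ + dI + dA + dH with hm
  have hmpos : 0 < m := by rw [hm]; linarith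
  clear_value m
  have hμΛ : μ * (Λ / μ) = Λ := by field_simp
  have hmΛ : m * (Λ / m) = Λ := by field_simp
  -- upper comparison
  have hanti := anti_exp (convex_Ici (0:ℝ)) (g := fun u => (∑ i, x u i) - Λ/μ)
    (g' := fun u => Λ - μ * (∑ i, x u i) - dA * x u 3 - dI * x u 4 - dH * x u 5) μ
    (hNcont.sub continuousOn_const)
    (by
      intro u hu
      rw [interior_Ici] at hu ⊢
      exact ((hN' u hu.le).sub_const _).mono fun s hs => Set.mem_Ici.2 (le_of_lt (Set.mem_Ioi.1 hs)))
    (by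
      intro u hu
      rw [interior_Ici] at hu
      have h3 := hpos u hu.le 3
      have h4 := hpos u hu.le 4
      have h5 := hpos u hu.le 5
      nlinarith [mul_pos hdA h3, mul_pos hdI h4, mul_pos hdH h5])
  have hup : ∀ t, 0 ≤ t →
      ((∑ i, x t i) - Λ/μ) * Real.exp (μ*t) ≤ (∑ i, x 0 i) - Λ/μ := by
    intro t ht
    have h := hanti Set.self_mem_Ici ht ht
    simpa using h
  -- lower comparison
  have hmono := mono_exp (convex_Ici (0:ℝ)) (g := fun u => (∑ i, x u i) - Λ/m)
    (g' := fun u => Λ - μ * (∑ i, x u i) - dA * x u 3 - dI * x u 4 - dH * x u 5) m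
    (hNcont.sub continuousOn_const)
    (by
      intro u hu
      rw [interior_Ici] at hu ⊢
      exact ((hN' u hu.le).sub_const _).mono fun s hs => Set.mem_Ici.2 (le_of_lt (Set.mem_Ioi.1 hs)))
    (by
      intro u hu
      rw [interior_Ici] at hu
      have h3 := mul_le_mul_of_nonneg_left (hcomp_le u hu.le 3) hdA.le
      have h4 := mul_le_mul_of_nonneg_left (hcomp_le u hu.le 4) hdI.le
      have h5 := mul_le_mul_of_nonneg_left (hcomp_le u hu.le 5) hdH.le
      have hmN : m * (∑ j, x u j)
          = μ * (∑ j, x u j) + dI * (∑ j, x u j) + dA * (∑ j, x u j) + dH * (∑ j, x u j) := by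
        rw [hm]; ring
      linarith [h3, h4, h5, hmΛ, hmN])
  have hlow : ∀ t, 0 ≤ t →
      (∑ i, x 0 i) - Λ/m ≤ ((∑ i, x t i) - Λ/m) * Real.exp (m*t) := by
    intro t ht
    have h := hmono Set.self_mem_Ici ht ht
    simpa using h
  -- choose T
  set C := |(∑ i, x 0 i) - Λ/μ| + |(∑ i, x 0 i) - Λ/m| + 1 with hC
  have hCpos : 0 < C := by positivity
  set δ := min η η' with hδ
  have hδpos : 0 < δ := lt_min hη hη'
  have hδη : δ ≤ η := by rw [hδ]; exact min_le_left _ _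
  have hδη' : δ ≤ η' := by rw [hδ]; exact min_le_right _ _
  clear_value C δ
  refine ⟨max 0 (Real.log (C/δ) / μ), le_max_left _ _, ?_⟩
  intro t ht
  have ht0 : 0 ≤ t := le_trans (le_max_left _ _) ht
  have hlog : Real.log (C/δ) ≤ μ * t := by
    have h := le_trans (le_max_right 0 (Real.log (C/δ) / μ)) ht
    rw [div_le_iff₀ hμ] at h
    linarith
  have hexp : C/δ ≤ Real.exp (μ*t) := by
    calc C/δ = Real.exp (Real.log (C/δ)) := (Real.exp_log (by positivity)).symm
      _ ≤ _ := Real.exp_le_exp.2 hlog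
  have hkeyexp : C * Real.exp (-(μ*t)) ≤ δ := by
    have h1 : δ * (C/δ) = C := by field_simp
    have h2 : C ≤ δ * Real.exp (μ*t) := by
      rw [← h1]
      exact mul_le_mul_of_nonneg_left hexp hδpos.le
    rw [Real.exp_neg, ← div_eq_mul_inv, div_le_iff₀ (Real.exp_pos _)]
    exact h2
  have hule : (∑ i, x 0 i) - Λ/μ ≤ C := by
    rw [hC]
    linarith [le_abs_self ((∑ i, x 0 i) - Λ/μ), abs_nonneg ((∑ i, x 0 i) - Λ/m)]
  have hlle : -C ≤ (∑ i, x 0 i) - Λ/m := by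
    rw [hC]
    linarith [neg_abs_le ((∑ i, x 0 i) - Λ/m), abs_nonneg ((∑ i, x 0 i) - Λ/μ)]
  constructor
  · -- lower bound
    have h6 := hlle.trans (hlow t ht0)
    have h7 := mul_le_mul_of_nonneg_right h6 (Real.exp_nonneg (-(m*t)))
    rw [mul_assoc, ← Real.exp_add] at h7
    simp only [add_neg_cancel, Real.exp_zero, mul_one] at h7
    have h8 : C * Real.exp (-(m*t)) ≤ C * Real.exp (-(μ*t)) :=
      mul_le_mul_of_nonneg_left (Real.exp_le_exp.2 (by nlinarith [hm])) hCpos.le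
    have h9 : -C * Real.exp (-(m*t)) = -(C * Real.exp (-(m*t))) := by ring
    rw [h9] at h7
    linarith [hkeyexp, hδη']
  · -- upper bound
    have h4 := mul_le_mul_of_nonneg_right ((hup t ht0).trans hule) (Real.exp_nonneg (-(μ*t)))
    rw [mul_assoc, ← Real.exp_add] at h4
    simp only [add_neg_cancel, Real.exp_zero, mul_one] at h4
    linarith [hkeyexp, hδη]
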